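/- Let X ∈ ℝ^{m×n} be T₁-sparse with parameters (v, t₁, t₂, c) with c > 0, let u > 0 satisfy m·n·u ≤ 1/64 and n·(n+1)·u ≤ 1/64, and set γ_{n+1} := (n+1)·u/(1 − (n+1)·u). Let s be a real number with 11·(m·u + (n+1)·u)·(v·t₁ + n·t₂)·c² ≤ s ≤ (1/(100·n))·(v·t₁ + n·t₂)·c². Suppose Y ∈ ℝ^{n×n} and E_A, E_B ∈ ℝ^{n×n} satisfy YᵀY = XᵀX + s·I + E_A + E_B, ‖E_A‖₂ ≤ 1.1·m·u·(v·t₁ + n·t₂)·c², and the entrywise bound |(E_B)_{ij}| ≤ γ_{n+1}·Σ_{k=1}^{n} |y_{ki}|·|y_{kj}| for all i, j. Then ‖E_B‖₂ ≤ 1.1·(n+1)·u·(v·t₁ + n·t₂)·c². -/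

import Mathlib

open Matrix Finset

noncomputable def specNorm {m n : ℕ} (A : Matrix (Fin m) (Fin n) ℝ) : ℝ :=
  ‖(Matrix.toEuclideanLin A).toContinuousLinearMap‖

noncomputable def frobNorm {m n : ℕ} (A : Matrix (Fin m) (Fin n) ℝ) : ℝ :=
  Real.sqrt (∑ i, ∑ j, (A i j) ^ 2)

noncomputable def gNorm {m n : ℕ} (A : Matrix (Fin m) (Fin n) ℝ) : ℝ :=
  ⨆ j : Fin n, Real.sqrt (∑ i, (A i j) ^ 2)

noncomputable def sigmaMin {m n : ℕ} (A : Matrix (Fin m) (Fin n) ℝ) : ℝ :=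
  ⨅ x : Metric.sphere (0 : EuclideanSpace ℝ (Fin n)) 1,
    ‖(Matrix.toEuclideanLin A) (x : EuclideanSpace ℝ (Fin n))‖

noncomputable def condNum {m n : ℕ} (A : Matrix (Fin m) (Fin n) ℝ) : ℝ :=
  specNorm A / sigmaMin A

def IsT1Sparse {m n : ℕ} (X : Matrix (Fin m) (Fin n) ℝ) (v t₁ t₂ : ℕ) (c : ℝ) : Prop :=
  ∃ S : Finset (Fin n), S.card = v ∧
    (∀ j ∈ S, Set.ncard {i | X i j ≠ 0} ≤ t₁) ∧
    (∀ j ∉ S, Set.ncard {i | X i j ≠ 0} ≤ t₂) ∧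
    ∀ i j, |X i j| ≤ c

lemma euclid_comp_le_norm {n : ℕ} (y : EuclideanSpace ℝ (Fin n)) (i : Fin n) :
    |y i| ≤ ‖y‖ := by
  rw [EuclideanSpace.norm_eq]
  rw [← Real.sqrt_sq (abs_nonneg (y i))]
  apply Real.sqrt_le_sqrt
  calc |y i| ^ 2 = ‖y i‖ ^ 2 := by rw [Real.norm_eq_abs]
    _ ≤ ∑ j, ‖y j‖ ^ 2 :=
      Finset.single_le_sum (f := fun j => ‖y j‖ ^ 2) (fun j _ => sq_nonneg _) (Finset.mem_univ i)

lemma toEuclideanLin_comp {m n : ℕ} (A : Matrix (Fin m) (Fin n) ℝ)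
    (x : EuclideanSpace ℝ (Fin n)) (i : Fin m) :
    (Matrix.toEuclideanLin A).toContinuousLinearMap x i = ∑ j, A i j * x j := rfl

lemma specNorm_le_frob {m n : ℕ} (A : Matrix (Fin m) (Fin n) ℝ) :
    specNorm A ≤ Real.sqrt (∑ i, ∑ j, (A i j) ^ 2) := by
  apply ContinuousLinearMap.opNorm_le_bound _ (Real.sqrt_nonneg _)
  intro x
  rw [EuclideanSpace.norm_eq, EuclideanSpace.norm_eq]
  rw [← Real.sqrt_mul (by positivity)]
  apply Real.sqrt_le_sqrt
  have hcomp : ∀ i, ‖(Matrix.toEuclideanLin A).toContinuousLinearMap x i‖ ^ 2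
      = (∑ j, A i j * x j) ^ 2 := by
    intro i; rw [toEuclideanLin_comp, Real.norm_eq_abs, sq_abs]
  simp_rw [hcomp, Real.norm_eq_abs, sq_abs]
  calc ∑ i, (∑ j, A i j * x j) ^ 2
      ≤ ∑ i, (∑ j, (A i j) ^ 2) * (∑ j, (x j) ^ 2) := by
        apply Finset.sum_le_sum
        intro i _
        exact Finset.sum_mul_sq_le_sq_mul_sq _ _ _
    _ = (∑ i, ∑ j, (A i j) ^ 2) * ∑ j, (x j) ^ 2 := by rw [Finset.sum_mul]

lemma diag_le_specNorm {n : ℕ} (A : Matrix (Fin n) (Fin n) ℝ) (i : Fin n) :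
    A i i ≤ specNorm A := by
  set e : EuclideanSpace ℝ (Fin n) := EuclideanSpace.single i (1 : ℝ) with he
  have h1 : (Matrix.toEuclideanLin A).toContinuousLinearMap e i = A i i := by
    rw [toEuclideanLin_comp]
    simp [he, EuclideanSpace.single_apply]
  calc A i i ≤ |(Matrix.toEuclideanLin A).toContinuousLinearMap e i| := by
        rw [h1]; exact le_abs_self _
    _ ≤ ‖(Matrix.toEuclideanLin A).toContinuousLinearMap e‖ := euclid_comp_le_norm _ _
    _ ≤ specNorm A * ‖e‖ := ContinuousLinearMap.le_opNorm _ _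
    _ = specNorm A := by rw [he, EuclideanSpace.norm_single]; simp

set_option maxHeartbeats 1000000 in
/-- Bound on the Cholesky rounding error matrix E_B for a T₁-sparse X. -/
theorem stmt6 {m n : ℕ} (X : Matrix (Fin m) (Fin n) ℝ) (v t₁ t₂ : ℕ) (c u s : ℝ)
    (hv1 : 1 ≤ v) (hvn : v ≤ n) (ht : t₂ ≤ t₁) (htm : t₁ ≤ m) (hc : 0 < c)
    (hX : IsT1Sparse X v t₁ t₂ c) (hu : 0 < u)
    (hmnu : (m : ℝ) * n * u ≤ 1 / 64) (hnnu : (n : ℝ) * (n + 1) * u ≤ 1 / 64)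
    (hs1 : 11 * ((m : ℝ) * u + ((n : ℝ) + 1) * u) * ((v : ℝ) * t₁ + (n : ℝ) * t₂) * c ^ 2 ≤ s)
    (hs2 : s ≤ (1 / (100 * (n : ℝ))) * ((v : ℝ) * t₁ + (n : ℝ) * t₂) * c ^ 2)
    (Y EA EB : Matrix (Fin n) (Fin n) ℝ)
    (hGram : Yᵀ * Y = Xᵀ * X + s • (1 : Matrix (Fin n) (Fin n) ℝ) + EA + EB)
    (hEA : specNorm EA ≤ 1.1 * m * u * ((v : ℝ) * t₁ + (n : ℝ) * t₂) * c ^ 2)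
    (hEB : ∀ i j, |EB i j| ≤
      (((n : ℝ) + 1) * u / (1 - ((n : ℝ) + 1) * u)) * ∑ k, |Y k i| * |Y k j|) :
    specNorm EB ≤ 1.1 * ((n : ℝ) + 1) * u * ((v : ℝ) * t₁ + (n : ℝ) * t₂) * c ^ 2 := by
  classical
  obtain ⟨S, hScard, hS1, hS2, hbound⟩ := hX
  have hn1 : (1:ℝ) ≤ (n:ℝ) := by exact_mod_cast le_trans hv1 hvn
  have hn0 : (0:ℝ) < (n:ℝ) := by linarith
  set a : ℝ := ((n:ℝ) + 1) * u with ha_def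
  have ha0 : 0 < a := by positivity
  have ha64 : a ≤ 1/64 := by nlinarith [mul_nonneg (mul_nonneg (by linarith : (0:ℝ) ≤ (n:ℝ) - 1) (by positivity : (0:ℝ) ≤ (n:ℝ) + 1)) hu.le]
  set g : ℝ := a / (1 - a) with hg_def
  have h1a : (63:ℝ)/64 ≤ 1 - a := by linarith
  have hg0 : 0 ≤ g := div_nonneg ha0.le (by linarith)
  set K : ℝ := (v:ℝ) * t₁ + (n:ℝ) * t₂ with hK_def
  have hK0 : 0 ≤ K := by positivity
  have hKc : 0 ≤ K * c^2 := by positivity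
  set F : ℝ := ∑ i, ∑ k, (Y k i)^2 with hF_def
  have hF0 : 0 ≤ F := by positivity
  -- Step 1 : specNorm EB ≤ g * F
  have hEB_spec : specNorm EB ≤ g * F := by
    refine le_trans (specNorm_le_frob EB) ?_
    have hsum : ∑ i, ∑ j, (EB i j)^2 ≤ (g*F)^2 := by
      calc ∑ i, ∑ j, (EB i j)^2
          ≤ ∑ i : Fin n, ∑ j : Fin n, g^2 * ((∑ k, (Y k i)^2) * (∑ k, (Y k j)^2)) := by
            apply Finset.sum_le_sum; intro i _
            apply Finset.sum_le_sum; intro j _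
            have h1 := hEB i j
            have h2 : (∑ k, |Y k i| * |Y k j|)^2 ≤ (∑ k, (Y k i)^2) * (∑ k, (Y k j)^2) := by
              have := Finset.sum_mul_sq_le_sq_mul_sq Finset.univ
                (fun k => |Y k i|) (fun k => |Y k j|)
              simpa [sq_abs] using this
            have h3 : (EB i j)^2 ≤ (g * ∑ k, |Y k i| * |Y k j|)^2 := by
              rw [← sq_abs (EB i j)]
              exact pow_le_pow_left₀ (abs_nonneg _) h1 2
            calc (EB i j)^2 ≤ (g * ∑ k, |Y k i| * |Y k j|)^2 := h3
              _ = g^2 * (∑ k, |Y k i| * |Y k j|)^2 := by ring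
              _ ≤ g^2 * ((∑ k, (Y k i)^2) * (∑ k, (Y k j)^2)) :=
                  mul_le_mul_of_nonneg_left h2 (sq_nonneg g)
        _ = (g*F)^2 := by
            simp_rw [← Finset.mul_sum, ← Finset.sum_mul]
            rw [hF_def]; ring
    calc Real.sqrt (∑ i, ∑ j, (EB i j)^2) ≤ Real.sqrt ((g*F)^2) := Real.sqrt_le_sqrt hsum
      _ = g*F := Real.sqrt_sq (by positivity)
  -- Step 2 : trace identity
  have htr := congrArg Matrix.trace hGram
  rw [Matrix.trace_add, Matrix.trace_add, Matrix.trace_add, Matrix.trace_smul, Matrix.trace_one] at htr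
  have htrY : Matrix.trace (Yᵀ * Y) = F := by
    rw [hF_def]
    simp [Matrix.trace, Matrix.diag, Matrix.mul_apply, Matrix.transpose_apply, sq]
  -- Step 3 : trace bounds
  have hcol : ∀ (j : Fin n) (t : ℕ), Set.ncard {i | X i j ≠ 0} ≤ t →
      ∑ i, (X i j)^2 ≤ (t:ℝ) * c^2 := by
    intro j t hts
    have hb : ∀ i, (X i j)^2 ≤ c^2 := fun i => by
      rw [← sq_abs]
      exact pow_le_pow_left₀ (abs_nonneg _) (hbound i j) 2
    have heq : ∑ i, (X i j)^2
        = ∑ i ∈ Finset.univ.filter (fun i => X i j ≠ 0), (X i j)^2 := by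
      refine (Finset.sum_filter_of_ne ?_).symm
      intro i _ h hz
      exact h (by rw [hz]; ring)
    have hcard : (Finset.univ.filter (fun i => X i j ≠ 0)).card ≤ t := by
      have he : {i | X i j ≠ 0}.ncard
          = (Finset.univ.filter (fun i => X i j ≠ 0)).card := by
        rw [Set.ncard_eq_toFinset_card']
        congr 1
        ext i; simp
      omega
    calc ∑ i, (X i j)^2
        = ∑ i ∈ Finset.univ.filter (fun i => X i j ≠ 0), (X i j)^2 := heq
      _ ≤ (Finset.univ.filter (fun i => X i j ≠ 0)).card • c^2 :=
          Finset.sum_le_card_nsmul _ _ _ (fun i _ => hb i)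
      _ = ((Finset.univ.filter (fun i => X i j ≠ 0)).card : ℝ) * c^2 := nsmul_eq_mul _ _
      _ ≤ (t:ℝ) * c^2 := by
          have : ((Finset.univ.filter (fun i => X i j ≠ 0)).card : ℝ) ≤ (t:ℝ) := by
            exact_mod_cast hcard
          exact mul_le_mul_of_nonneg_right this (sq_nonneg c)
  have htrX : Matrix.trace (Xᵀ * X) ≤ K * c^2 := by
    have hXtr : Matrix.trace (Xᵀ * X) = ∑ j, ∑ i, (X i j)^2 := by
      simp [Matrix.trace, Matrix.diag, Matrix.mul_apply, Matrix.transpose_apply, sq]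
    rw [hXtr, ← Finset.sum_add_sum_compl S]
    have h1 : ∑ j ∈ S, ∑ i, (X i j)^2 ≤ (v:ℝ) * ((t₁:ℝ) * c^2) := by
      calc ∑ j ∈ S, ∑ i, (X i j)^2 ≤ ∑ _j ∈ S, (t₁:ℝ) * c^2 :=
          Finset.sum_le_sum (fun j hj => hcol j t₁ (hS1 j hj))
        _ = (S.card : ℝ) * ((t₁:ℝ) * c^2) := by rw [Finset.sum_const, nsmul_eq_mul]
        _ = (v:ℝ) * ((t₁:ℝ) * c^2) := by rw [hScard]
    have h2 : ∑ j ∈ Sᶜ, ∑ i, (X i j)^2 ≤ (n:ℝ) * ((t₂:ℝ) * c^2) := by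
      calc ∑ j ∈ Sᶜ, ∑ i, (X i j)^2 ≤ ∑ _j ∈ Sᶜ, (t₂:ℝ) * c^2 :=
          Finset.sum_le_sum (fun j hj => hcol j t₂ (hS2 j (Finset.mem_compl.mp hj)))
        _ = (Sᶜ.card : ℝ) * ((t₂:ℝ) * c^2) := by rw [Finset.sum_const, nsmul_eq_mul]
        _ ≤ (n:ℝ) * ((t₂:ℝ) * c^2) := by
            have hcc : (Sᶜ.card : ℝ) ≤ (n:ℝ) := by
              have := Finset.card_le_univ Sᶜ
              simp only [Finset.card_univ, Fintype.card_fin] at this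
              exact_mod_cast this
            exact mul_le_mul_of_nonneg_right hcc (by positivity)
    calc ∑ j ∈ S, ∑ i, (X i j)^2 + ∑ j ∈ Sᶜ, ∑ i, (X i j)^2
        ≤ (v:ℝ) * ((t₁:ℝ) * c^2) + (n:ℝ) * ((t₂:ℝ) * c^2) := add_le_add h1 h2
      _ = K * c^2 := by rw [hK_def]; ring
  have htrEA : Matrix.trace EA ≤ (n:ℝ) * specNorm EA := by
    calc Matrix.trace EA = ∑ i, EA i i := by simp [Matrix.trace, Matrix.diag]
      _ ≤ ∑ _i : Fin n, specNorm EA := Finset.sum_le_sum (fun i _ => diag_le_specNorm EA i)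
      _ = (n:ℝ) * specNorm EA := by
          rw [Finset.sum_const, nsmul_eq_mul, Finset.card_univ, Fintype.card_fin]
  have htrEB : Matrix.trace EB ≤ g * F := by
    calc Matrix.trace EB = ∑ i, EB i i := by simp [Matrix.trace, Matrix.diag]
      _ ≤ ∑ i, g * ∑ k, (Y k i)^2 := by
          apply Finset.sum_le_sum; intro i _
          have h := le_trans (le_abs_self _) (hEB i i)
          have he : ∑ k, |Y k i| * |Y k i| = ∑ k, (Y k i)^2 := by
            simp [abs_mul_abs_self, sq]
          rwa [he] at h
      _ = g * F := by rw [hF_def, Finset.mul_sum]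
  -- Step 4 : combine
  have hsn : s * (n:ℝ) ≤ (1/100) * (K * c^2) := by
    have h := mul_le_mul_of_nonneg_right hs2 hn0.le
    calc s * (n:ℝ) ≤ 1 / (100 * (n:ℝ)) * K * c^2 * (n:ℝ) := h
      _ = (1/100) * (K * c^2) := by field_simp
  have hEAn : (n:ℝ) * specNorm EA ≤ (1.1/64) * (K * c^2) := by
    calc (n:ℝ) * specNorm EA ≤ (n:ℝ) * (1.1 * m * u * K * c^2) :=
        mul_le_mul_of_nonneg_left hEA hn0.le
      _ = 1.1 * ((m:ℝ) * n * u) * (K * c^2) := by ring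
      _ ≤ 1.1 * (1/64) * (K * c^2) := by
          have h11 : (1.1:ℝ) * ((m:ℝ) * n * u) ≤ 1.1 * (1/64) := by linarith
          exact mul_le_mul_of_nonneg_right h11 hKc
      _ = (1.1/64) * (K * c^2) := by ring
  have hFsub : F - g * F ≤ (1 + 1/100 + 1.1/64) * (K * c^2) := by
    have hF' : F ≤ K * c^2 + (1/100) * (K*c^2) + (1.1/64) * (K*c^2) + g * F := by
      have := htr
      rw [htrY, smul_eq_mul, Fintype.card_fin] at this
      have htrEA' := le_trans htrEA hEAn
      nlinarith [htrX, hsn, htrEA', htrEB]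
    linarith
  have hg63 : g ≤ 1/63 := by
    rw [hg_def, div_le_iff₀ (by linarith)]; linarith
  have hF2 : (62/63) * F ≤ (1 + 1/100 + 1.1/64) * (K * c^2) := by
    nlinarith [hF0, hg63, hFsub]
  have hga' : g ≤ (64/63) * a := by
    rw [hg_def, div_le_iff₀ (by linarith)]; nlinarith
  have final : specNorm EB ≤ 1.1 * a * (K * c^2) := by
    have hFle : F ≤ (63/62) * ((1 + 1/100 + 1.1/64) * (K * c^2)) := by linarith
    calc specNorm EB ≤ g * F := hEB_spec
      _ ≤ ((64/63) * a) * ((63/62) * ((1 + 1/100 + 1.1/64) * (K * c^2))) := by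
          apply mul_le_mul hga' hFle hF0 (by positivity)
      _ ≤ 1.1 * a * (K * c^2) := by nlinarith [mul_nonneg ha0.le hKc]
  refine le_trans final (le_of_eq ?_)
  rw [ha_def, hK_def]; ring
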